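/- The Fréchet derivative of the Riccati operator D(X) = CᵀC + AᵀX(I + BBᵀX)⁻¹A at X is the linear map ΔX ↦ A_Xᵀ · ΔX · A_X, where A_X = (I + BBᵀX)⁻¹A is the closed loop matrix; equivalently, d(D(X)) = Aᵀ(I + XBBᵀ)⁻¹ dX (I + BBᵀX)⁻¹A. -/

import Mathlib

open Matrix

attribute [local instance] Matrix.frobeniusNormedAddCommGroup Matrix.frobeniusNormedSpace
attribute [local instance] Matrix.frobeniusNormedRing Matrix.frobeniusNormedAlgebra

private lemma aux_alg {n : ℕ} (A X R K Δ : Matrix (Fin n) (Fin n) ℝ)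
    (hT : (R * A)ᵀ = Aᵀ * (1 - X * R * K)) :
    Aᵀ * (X * -(R * (K * Δ) * R) + Δ * R) * A =
      (R * A)ᵀ * (Δ * (R * A)) := by
  rw [hT]
  noncomm_ring

set_option maxHeartbeats 1600000 in
theorem stmt_13 {n m l : ℕ}
    (A : Matrix (Fin n) (Fin n) ℝ) (B : Matrix (Fin n) (Fin m) ℝ)
    (C : Matrix (Fin l) (Fin n) ℝ)
    (X : Matrix (Fin n) (Fin n) ℝ) (hX : Xᵀ = X)
    (hinv : IsUnit (1 + B * Bᵀ * X)) :
    HasFDerivAt (fun Y : Matrix (Fin n) (Fin n) ℝ =>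
        Cᵀ * C + Aᵀ * Y * (1 + B * Bᵀ * Y)⁻¹ * A)
      (LinearMap.toContinuousLinearMap
        (((LinearMap.mulLeft ℝ (((1 + B * Bᵀ * X)⁻¹ * A)ᵀ)).comp
          (LinearMap.mulRight ℝ ((1 + B * Bᵀ * X)⁻¹ * A))))) X ∧
    ∀ Δ : Matrix (Fin n) (Fin n) ℝ,
      ((1 + B * Bᵀ * X)⁻¹ * A)ᵀ * Δ * ((1 + B * Bᵀ * X)⁻¹ * A) =
        Aᵀ * (1 + X * B * Bᵀ)⁻¹ * Δ * (1 + B * Bᵀ * X)⁻¹ * A := by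
  have hSt : (1 + B * Bᵀ * X)ᵀ = 1 + X * B * Bᵀ := by
    rw [transpose_add, transpose_one, transpose_mul, transpose_mul, transpose_transpose, hX,
      Matrix.mul_assoc]
  have htrans : ((1 + B * Bᵀ * X)⁻¹ * A)ᵀ = Aᵀ * (1 + X * B * Bᵀ)⁻¹ := by
    rw [transpose_mul, transpose_nonsing_inv, hSt]
  have hdet : IsUnit (1 + B * Bᵀ * X).det := (Matrix.isUnit_iff_isUnit_det _).mp hinv
  have hSS : (1 + B * Bᵀ * X) * (1 + B * Bᵀ * X)⁻¹ = 1 := Matrix.mul_nonsing_inv _ hdet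
  have hXKunit : (1 + X * B * Bᵀ) * (1 - X * (1 + B * Bᵀ * X)⁻¹ * (B * Bᵀ)) = 1 := by
    have key : (1 + X * B * Bᵀ) * (X * (1 + B * Bᵀ * X)⁻¹ * (B * Bᵀ)) = X * (B * Bᵀ) := by
      have h1 : (1 + X * B * Bᵀ) * X = X * (1 + B * Bᵀ * X) := by
        simp [Matrix.mul_add, Matrix.add_mul, Matrix.mul_assoc]
      calc (1 + X * B * Bᵀ) * (X * (1 + B * Bᵀ * X)⁻¹ * (B * Bᵀ))
          = ((1 + X * B * Bᵀ) * X) * (1 + B * Bᵀ * X)⁻¹ * (B * Bᵀ) := by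
            simp only [Matrix.mul_assoc]
        _ = X * ((1 + B * Bᵀ * X) * (1 + B * Bᵀ * X)⁻¹) * (B * Bᵀ) := by
            rw [h1]; simp only [Matrix.mul_assoc]
        _ = X * (B * Bᵀ) := by rw [hSS]; simp [Matrix.mul_assoc]
    rw [mul_sub, mul_one, key]
    simp [Matrix.mul_assoc]
  have hXKinv : (1 + X * B * Bᵀ)⁻¹ = 1 - X * (1 + B * Bᵀ * X)⁻¹ * (B * Bᵀ) :=
    Matrix.inv_eq_right_inv hXKunit
  constructor
  · -- derivative part
    have hfun : (fun Y : Matrix (Fin n) (Fin n) ℝ =>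
        Cᵀ * C + Aᵀ * Y * (1 + B * Bᵀ * Y)⁻¹ * A) =
        (fun Y => Cᵀ * C + Aᵀ * (Y * Ring.inverse (1 + B * Bᵀ * Y)) * A) := by
      funext Y
      rw [Matrix.nonsing_inv_eq_ringInverse]
      noncomm_ring
    rw [hfun]
    have h1 : HasFDerivAt (fun Y : Matrix (Fin n) (Fin n) ℝ => 1 + B * Bᵀ * Y)
        (LinearMap.toContinuousLinearMap (LinearMap.mulLeft ℝ (B * Bᵀ))) X := by
      have := (LinearMap.toContinuousLinearMap (LinearMap.mulLeft ℝ (B * Bᵀ))).hasFDerivAt (x := X)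
      exact this.const_add 1
    have h2 := hasFDerivAt_ringInverse (𝕜 := ℝ) hinv.unit
    rw [hinv.unit_spec] at h2
    have hcomp : HasFDerivAt
        (fun Y : Matrix (Fin n) (Fin n) ℝ => Ring.inverse (1 + B * Bᵀ * Y))
        ((-ContinuousLinearMap.mulLeftRight ℝ _ ↑hinv.unit⁻¹ ↑hinv.unit⁻¹).comp
          (LinearMap.toContinuousLinearMap (LinearMap.mulLeft ℝ (B * Bᵀ)))) X := by
      have := h2.comp X h1
      exact this
    have h3 := (hasFDerivAt_id X).mul' hcomp
    have h4 := (h3.const_mul Aᵀ).mul_const' A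
    have h5 := h4.const_add (Cᵀ * C)
    refine h5.congr_fderiv ?_
    refine ContinuousLinearMap.ext fun Δ => ?_
    have hu : (↑hinv.unit⁻¹ : Matrix (Fin n) (Fin n) ℝ) = Ring.inverse (1 + B * Bᵀ * X) := by
      rw [← Ring.inverse_unit, hinv.unit_spec]
    have hT : (Ring.inverse (1 + B * Bᵀ * X) * A)ᵀ =
        Aᵀ * (1 - X * Ring.inverse (1 + B * Bᵀ * X) * (B * Bᵀ)) := by
      simp only [← Matrix.nonsing_inv_eq_ringInverse]
      rw [htrans, hXKinv]
    simp only [ContinuousLinearMap.coe_comp',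
      Function.comp_apply, LinearMap.coe_toContinuousLinearMap',
      LinearMap.coe_comp, LinearMap.mulLeft_apply, LinearMap.mulRight_apply,
      ContinuousLinearMap.add_apply, ContinuousLinearMap.smul_apply,
      ContinuousLinearMap.smulRight_apply, ContinuousLinearMap.coe_id',
      id_eq, ContinuousLinearMap.neg_apply, ContinuousLinearMap.mulLeftRight_apply,
      smul_eq_mul, hu, Matrix.nonsing_inv_eq_ringInverse]
    exact aux_alg A X (Ring.inverse (1 + B * Bᵀ * X)) (B * Bᵀ) Δ hT
  · intro Δ
    rw [htrans, Matrix.mul_assoc (Aᵀ * (1 + X * B * Bᵀ)⁻¹ * Δ)]
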